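/- Let p and q be distinct primes with p + q = n. Then there exists a cyclic permutation a_1, ..., a_n of {1,...,n} with |a_i - a_{i+1}| ∈ {p, q} for all 1 ≤ i ≤ n-1 and |a_n - a_1| ∈ {p, q}. In fact the sequence of residues p, 2p, 3p, ..., np taken modulo n (with representatives in {1,...,n}) is such a cyclic permutation. -/

import Mathlib

/-- If `p` and `q` are distinct primes with `p + q = n`, then the sequence of residues
`p, 2p, ..., np` modulo `n`, with representatives taken in `{1,...,n}`, is a cyclic
permutation of `{1,...,n}` all of whose consecutive absolute differences (including the
wrap-around one) are `p` or `q`. -/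
theorem ham_cycle_two_primes (p q n : ℕ) (hp : p.Prime) (hq : q.Prime)
    (hpq : p ≠ q) (hn : p + q = n) :
    let a : ℕ → ℤ := fun i => if ((i + 1) * p) % n = 0 then (n : ℤ) else (((i + 1) * p) % n : ℕ)
    Set.BijOn a (Set.Ico 0 n) (Set.Icc 1 (n : ℤ)) ∧
      (∀ i, i + 1 < n → (a i - a (i + 1)).natAbs = p ∨ (a i - a (i + 1)).natAbs = q) ∧
      ((a (n - 1) - a 0).natAbs = p ∨ (a (n - 1) - a 0).natAbs = q) := by
  intro a
  have hp2 := hp.two_le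
  have hq2 := hq.two_le
  have hn0 : 0 < n := by omega
  have hpn : p < n := by omega
  have hqn : q < n := by omega
  have cop : Nat.Coprime p n := by
    have h1 : Nat.Coprime p q := (Nat.coprime_primes hp hq).mpr hpq
    rw [← hn, add_comm]
    exact Nat.coprime_add_self_right.mpr h1
  have hr : ∀ i : ℕ, ((i + 1) * p) % n < n := fun i => Nat.mod_lt _ hn0
  have hz : ∀ i : ℕ, i + 1 < n → ((i + 1) * p) % n ≠ 0 := by
    intro i hi h
    have h1 : n ∣ (i + 1) * p := Nat.dvd_of_mod_eq_zero h
    have h2 : n ∣ (i + 1) := (Nat.Coprime.dvd_of_dvd_mul_right cop.symm) h1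
    have := Nat.le_of_dvd (by omega) h2
    omega
  -- MapsTo
  have hmaps : Set.MapsTo a (Set.Ico 0 n) (Set.Icc 1 (n : ℤ)) := by
    intro i hi
    simp only [Set.mem_Ico] at hi
    simp only [a, Set.mem_Icc]
    have := hr i
    split_ifs with h
    · constructor
      · exact_mod_cast hn0
      · exact le_refl _
    · constructor
      · exact_mod_cast Nat.one_le_iff_ne_zero.mpr h
      · exact_mod_cast (hr i).le
  -- InjOn
  have hinj : Set.InjOn a (Set.Ico 0 n) := by
    intro i hi j hj hij
    simp only [Set.mem_Ico] at hi hj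
    have hreq : ((i + 1) * p) % n = ((j + 1) * p) % n := by
      simp only [a] at hij
      split_ifs at hij with h1 h2 h2
      · rw [h1, h2]
      · have := hr j
        have : (((j + 1) * p) % n : ℤ) < (n : ℤ) := by exact_mod_cast this
        omega
      · have := hr i
        have : (((i + 1) * p) % n : ℤ) < (n : ℤ) := by exact_mod_cast this
        omega
      · exact_mod_cast hij
    have hmod : (i + 1) % n = (j + 1) % n :=
      Nat.ModEq.cancel_right_of_coprime (by rwa [Nat.coprime_comm] at cop) hreq
    have h1 : i + 1 ≤ n := hi.2
    have h2 : j + 1 ≤ n := hj.2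
    rcases Nat.lt_or_ge (i + 1) n with hx | hx
    · rw [Nat.mod_eq_of_lt hx] at hmod
      rcases Nat.lt_or_ge (j + 1) n with hy | hy
      · rw [Nat.mod_eq_of_lt hy] at hmod; omega
      · have : j + 1 = n := le_antisymm h2 hy
        rw [this, Nat.mod_self] at hmod; omega
    · have hxn : i + 1 = n := le_antisymm h1 hx
      rw [hxn, Nat.mod_self] at hmod
      rcases Nat.lt_or_ge (j + 1) n with hy | hy
      · rw [Nat.mod_eq_of_lt hy] at hmod; omega
      · have : j + 1 = n := le_antisymm h2 hy; omega
  -- SurjOn via cardinality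
  have e1 : (Set.Ico 0 n : Set ℕ).encard = n := by
    rw [← Finset.coe_Ico, Set.encard_coe_eq_coe_finsetCard, Nat.card_Ico, Nat.sub_zero]
  have e2 : (Set.Icc 1 (n : ℤ)).encard = n := by
    rw [← Finset.coe_Icc, Set.encard_coe_eq_coe_finsetCard, Int.card_Icc]
    norm_num
  have him : a '' (Set.Ico 0 n) = Set.Icc 1 (n : ℤ) := by
    apply Set.Finite.eq_of_subset_of_encard_le' (Set.finite_Icc _ _) hmaps.image_subset
    rw [hinj.encard_image, e1, e2]
  have hsurj : Set.SurjOn a (Set.Ico 0 n) (Set.Icc 1 (n : ℤ)) := him.symm.subset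
  refine ⟨⟨hmaps, hinj, hsurj⟩, ?_, ?_⟩
  · -- middle differences
    intro i hi
    obtain ⟨r, hrdef⟩ : ∃ r, ((i + 1) * p) % n = r := ⟨_, rfl⟩
    have hri : r < n := hrdef ▸ hr i
    have hzi : r ≠ 0 := hrdef ▸ hz i hi
    have hstep : ((i + 1 + 1) * p) % n = (r + p) % n := by
      conv_lhs => rw [show (i + 1 + 1) * p = (i + 1) * p + p by ring]
      rw [Nat.add_mod, Nat.mod_eq_of_lt hpn, hrdef]
    simp only [a, hrdef, if_neg hzi, hstep]
    rcases Nat.lt_or_ge (r + p) n with hlt | hge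
    · rw [Nat.mod_eq_of_lt hlt, if_neg (by omega)]
      left
      have : (r : ℤ) - ((r + p : ℕ) : ℤ) = -(p : ℤ) := by push_cast; ring
      rw [this, Int.natAbs_neg, Int.natAbs_natCast]
    · have hmod : (r + p) % n = r + p - n := by
        rw [Nat.mod_eq_sub_mod hge, Nat.mod_eq_of_lt (by omega)]
      rw [hmod]
      rcases Nat.eq_or_lt_of_le hge with heq | hgt
      · rw [if_pos (by omega)]
        left
        have : (r : ℤ) - (n : ℤ) = -(p : ℤ) := by
          have h' : (r : ℤ) + (p : ℤ) = (n : ℤ) := by exact_mod_cast congrArg (Nat.cast : ℕ → ℤ) heq.symm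
          linarith
        rw [this, Int.natAbs_neg, Int.natAbs_natCast]
      · rw [if_neg (by omega)]
        right
        have : (r : ℤ) - ((r + p - n : ℕ) : ℤ) = (q : ℤ) := by
          rw [Nat.cast_sub hge]
          push_cast
          have : (p : ℤ) + (q : ℤ) = (n : ℤ) := by exact_mod_cast congrArg (Nat.cast : ℕ → ℤ) hn
          linarith
        rw [this, Int.natAbs_natCast]
  · -- wrap-around
    have h1 : n - 1 + 1 = n := by omega
    have h2 : (n * p) % n = 0 := Nat.mul_mod_right n p
    have h3 : (1 * p) % n = p := by rw [one_mul, Nat.mod_eq_of_lt hpn]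
    simp only [a, h1, h2, if_pos rfl, Nat.zero_add, h3, if_neg (by omega : p ≠ 0),
      eq_self_iff_true, if_true]
    right
    have : (n : ℤ) - (p : ℤ) = (q : ℤ) := by
      have : (p : ℤ) + (q : ℤ) = (n : ℤ) := by exact_mod_cast congrArg (Nat.cast : ℕ → ℤ) hn
      linarith
    rw [this, Int.natAbs_natCast]
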